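/- Assume in addition to the setting that: Σ_{j=1}^m w_{ij} = 1 for every i, Σ_{i=1}^m w_{ij} = 1 for every j, ‖(W − (1/m)𝟏𝟏ᵀ)v‖ ≤ ρ‖v‖ for every v ∈ ℝ^m with ρ ∈ (0,1), and the spectral norm of W − I is at most 2. Let δ, δ' ≥ 0, let X = (x_i), X' = (x'_i) be tuples in (ℝ^{n₁})^m, Λ = (λ_i), Λ' = (λ'_i) and Y = (y_i), Y' = (y'_i) tuples in (ℝ^{n₂})^m, and V = (v_i), V' = (v'_i) tuples in (ℝ^{n₁})^m with v'_i = Σ_{j=1}^m w_{ij} v_j + ∇_x f_i(x'_i, y'_i) − ∇_x f_i(x_i, y_i) for each i. Suppose there exist Y⋆ satisfying the first-order maximality condition for Φ(X, Λ, ·) with Σ_i ‖y_i − y⋆_i‖² ≤ mδ²/μ², and Y'⋆ satisfying the first-order maximality condition for Φ(X', Λ', ·) with Σ_i ‖y'_i − y'⋆_i‖² ≤ mδ'²/μ². Then, writing v̄ = (1/m)Σ_i v_i and v̄' = (1/m)Σ_i v'_i and κ = L/μ: Σ_{i=1}^m ‖v'_i − v̄'‖² ≤ ρ Σ_{i=1}^m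 ‖v_i − v̄‖² + (L²/(1−ρ)) [ (1+6κ²) Σ_{i=1}^m ‖x'_i − x_i‖² + 6mκ² Σ_{i=1}^m ‖λ'_i − λ_i‖² + 3mδ'²/μ² + 3mδ²/μ² ]. -/

import Mathlib

open scoped BigOperators RealInnerProductSpace

private lemma norm_sq_coord {n : ℕ} (x : EuclideanSpace ℝ (Fin n)) : ‖x‖^2 = ∑ t, (x t)^2 := by
  rw [EuclideanSpace.norm_eq, Real.sq_sqrt (by positivity)]
  simp [sq_abs]

private lemma sum_smul_apply {m n : ℕ} (a : Fin m → ℝ) (u : Fin m → EuclideanSpace ℝ (Fin n))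
    (t : Fin n) : (∑ j, a j • u j) t = ∑ j, a j * u j t := by
  have h := map_sum (EuclideanSpace.proj (𝕜 := ℝ) t) (fun j => a j • u j) Finset.univ
  simp only [PiLp.proj_apply, PiLp.smul_apply, smul_eq_mul] at h
  exact h

private lemma block_op_bound {m n : ℕ} (a : Fin m → Fin m → ℝ) (C : ℝ)
    (hb : ∀ v : Fin m → ℝ, ∑ i, (∑ j, a i j * v j)^2 ≤ C * ∑ j, (v j)^2)
    (u : Fin m → EuclideanSpace ℝ (Fin n)) :
    ∑ i, ‖∑ j, a i j • u j‖^2 ≤ C * ∑ j, ‖u j‖^2 := by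
  have h1 : ∀ i : Fin m, ‖∑ j, a i j • u j‖^2 = ∑ t, (∑ j, a i j * u j t)^2 := by
    intro i; rw [norm_sq_coord]; congr 1; ext t; rw [sum_smul_apply]
  calc ∑ i, ‖∑ j, a i j • u j‖^2 = ∑ t, ∑ i, (∑ j, a i j * u j t)^2 := by
        simp_rw [h1]; rw [Finset.sum_comm]
    _ ≤ ∑ t, C * ∑ j, (u j t)^2 := Finset.sum_le_sum fun t _ => hb fun j => u j t
    _ = C * ∑ j, ‖u j‖^2 := by
        simp_rw [norm_sq_coord, Finset.mul_sum]; rw [Finset.sum_comm]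

private lemma young_ineq {E : Type*} [NormedAddCommGroup E] [InnerProductSpace ℝ E]
    {ρ : ℝ} (hρ0 : 0 < ρ) (hρ1 : ρ < 1) (a b : E) :
    ‖a + b‖^2 ≤ (1/ρ) * ‖a‖^2 + (1/(1-ρ)) * ‖b‖^2 := by
  have h1 : ‖a + b‖^2 = ‖a‖^2 + 2*⟪a,b⟫ + ‖b‖^2 := norm_add_sq_real a b
  have h2 : ⟪a,b⟫ ≤ ‖a‖*‖b‖ := real_inner_le_norm a b
  have hρ1' : (0:ℝ) < 1 - ρ := by linarith
  have key : ρ*(1-ρ)*‖a+b‖^2 ≤ (1-ρ)*‖a‖^2 + ρ*‖b‖^2 := by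
    nlinarith [sq_nonneg ((1-ρ)*‖a‖ - ρ*‖b‖), mul_pos hρ0 hρ1', norm_nonneg a, norm_nonneg b]
  have hρρ : (0:ℝ) < ρ*(1-ρ) := mul_pos hρ0 hρ1'
  calc ‖a+b‖^2 = (ρ*(1-ρ)*‖a+b‖^2)/(ρ*(1-ρ)) := by field_simp
    _ ≤ ((1-ρ)*‖a‖^2 + ρ*‖b‖^2)/(ρ*(1-ρ)) := by gcongr
    _ = (1/ρ) * ‖a‖^2 + (1/(1-ρ)) * ‖b‖^2 := by field_simp

private lemma norm_add3_sq_le {E : Type*} [NormedAddCommGroup E] (a b c : E) :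
    ‖a + b + c‖^2 ≤ 3*‖a‖^2 + 3*‖b‖^2 + 3*‖c‖^2 := by
  have h1 : ‖a+b+c‖ ≤ ‖a‖+‖b‖+‖c‖ :=
    (norm_add_le _ _).trans (add_le_add (norm_add_le a b) (le_refl ‖c‖))
  nlinarith [norm_nonneg a, norm_nonneg b, norm_nonneg c, norm_nonneg (a+b+c),
    sq_nonneg (‖a‖-‖b‖), sq_nonneg (‖a‖-‖c‖), sq_nonneg (‖b‖-‖c‖)]

private lemma variance_le {m n : ℕ} (hm : 0 < m) (d : Fin m → EuclideanSpace ℝ (Fin n)) :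
    ∑ i, ‖d i - (1/(m:ℝ)) • ∑ k, d k‖^2 ≤ ∑ i, ‖d i‖^2 := by
  have hm0 : (0:ℝ) < m := by exact_mod_cast hm
  set D := ∑ k, d k with hD
  have hterm : ∀ i : Fin m, ‖d i - (1/(m:ℝ)) • D‖^2
      = ‖d i‖^2 - 2*((1/(m:ℝ))*⟪d i, D⟫) + (1/(m:ℝ))^2*‖D‖^2 := by
    intro i
    rw [norm_sub_sq_real, real_inner_smul_right, norm_smul]
    simp [mul_pow, abs_of_pos (by positivity : (0:ℝ) < 1/(m:ℝ))]
  have hsum : ∑ i, ⟪d i, D⟫ = ‖D‖^2 := by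
    rw [← sum_inner, ← hD, real_inner_self_eq_norm_sq]
  calc ∑ i, ‖d i - (1/(m:ℝ)) • D‖^2
      = ∑ i, ‖d i‖^2 - 2*((1/(m:ℝ))*‖D‖^2) + (m:ℝ)*((1/(m:ℝ))^2*‖D‖^2) := by
        simp_rw [hterm]
        rw [Finset.sum_add_distrib, Finset.sum_sub_distrib, ← Finset.mul_sum, ← Finset.mul_sum, hsum]
        simp [Finset.card_univ]
    _ ≤ ∑ i, ‖d i‖^2 := by
        have : (m:ℝ)*((1/(m:ℝ))^2*‖D‖^2) = (1/(m:ℝ))*‖D‖^2 := by field_simp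
        rw [this]
        nlinarith [sq_nonneg ‖D‖, hm0, mul_nonneg (by positivity : (0:ℝ) ≤ 1/(m:ℝ)) (sq_nonneg ‖D‖)]



set_option maxHeartbeats 2000000 in
/-- One-step consensus-error contraction for the gradient-tracking
variables, with the `Y`-moves bounded through approximate maximizers: if `Y` is within
`√m δ/μ` (in Frobenius norm) of a point satisfying the first-order maximality condition
for `Φ(X, Λ, ·)` and similarly for `Y'`, then
`‖V'_⊥‖² ≤ ρ‖V_⊥‖² + (L²/(1−ρ))[(1+6κ²)‖X'−X‖² + 6mκ²‖Λ'−Λ‖² + 3mδ'²/μ² + 3mδ²/μ²]`. -/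
theorem dgdmax_tracking_consensus_contraction_approx
    {m n₁ n₂ : ℕ} (hm : 0 < m) (hn₁ : 0 < n₁) (hn₂ : 0 < n₂)
    (L μ ρ δ δ' : ℝ) (hμ : 0 < μ) (hLμ : μ ≤ L) (hρ0 : 0 < ρ) (hρ1 : ρ < 1)
    (hδ : 0 ≤ δ) (hδ' : 0 ≤ δ')
    (f : Fin m → EuclideanSpace ℝ (Fin n₁) → EuclideanSpace ℝ (Fin n₂) → ℝ)
    (Gx : Fin m → EuclideanSpace ℝ (Fin n₁) → EuclideanSpace ℝ (Fin n₂) →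
      EuclideanSpace ℝ (Fin n₁))
    (Gy : Fin m → EuclideanSpace ℝ (Fin n₁) → EuclideanSpace ℝ (Fin n₂) →
      EuclideanSpace ℝ (Fin n₂))
    (hGx : ∀ i x y, HasGradientAt (fun x' => f i x' y) (Gx i x y) x)
    (hGy : ∀ i x y, HasGradientAt (fun y' => f i x y') (Gy i x y) y)
    (hLip : ∀ i x y x' y',
      ‖Gx i x y - Gx i x' y'‖ ^ 2 + ‖Gy i x y - Gy i x' y'‖ ^ 2
        ≤ L ^ 2 * (‖x - x'‖ ^ 2 + ‖y - y'‖ ^ 2))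
    (hconc : ∀ i x y y', ⟪y - y', Gy i x y - Gy i x y'⟫ ≤ -μ * ‖y - y'‖ ^ 2)
    (h : EuclideanSpace ℝ (Fin n₂) → ℝ) (hconv : ConvexOn ℝ Set.univ h)
    (w : Fin m → Fin m → ℝ)
    (hrow : ∀ i, ∑ j, w i j = 1) (hcol : ∀ j, ∑ i, w i j = 1)
    (hcontr : ∀ v : Fin m → ℝ,
      ∑ i, (∑ j, (w i j - 1 / (m : ℝ)) * v j) ^ 2 ≤ ρ ^ 2 * ∑ j, (v j) ^ 2)
    -- `‖W − I‖₂ ≤ 2` (squared form), for `W − I` and its transpose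
    (hWI : ∀ v : Fin m → ℝ,
      ∑ i, (∑ j, (w i j - if i = j then 1 else 0) * v j) ^ 2 ≤ 4 * ∑ i, (v i) ^ 2)
    (hWIt : ∀ v : Fin m → ℝ,
      ∑ i, (∑ j, (w j i - if i = j then 1 else 0) * v j) ^ 2 ≤ 4 * ∑ i, (v i) ^ 2)
    (x x' v v' : Fin m → EuclideanSpace ℝ (Fin n₁))
    (lam lam' y y' : Fin m → EuclideanSpace ℝ (Fin n₂))
    (hupd : ∀ i, v' i = (∑ j, w i j • v j) + Gx i (x' i) (y' i) - Gx i (x i) (y i))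
    -- `y` is within `√m δ/μ` of an exact maximizer `Y⋆` of `Φ(X, Λ, ·)`
    (hY : ∃ ystar : Fin m → EuclideanSpace ℝ (Fin n₂),
      (∃ ζ : Fin m → EuclideanSpace ℝ (Fin n₂),
        (∀ i, ∀ z, h (ystar i) + ⟪ζ i, z - ystar i⟫ ≤ h z) ∧
        (∀ i, (1 / (m : ℝ)) • (Gy i (x i) (ystar i) - ζ i)
            = (L / (2 * Real.sqrt (m : ℝ))) •
                ∑ j, (w j i - if i = j then 1 else 0) • lam j)) ∧
      ∑ i, ‖y i - ystar i‖ ^ 2 ≤ (m : ℝ) * δ ^ 2 / μ ^ 2)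
    -- `y'` is within `√m δ'/μ` of an exact maximizer `Y'⋆` of `Φ(X', Λ', ·)`
    (hY' : ∃ ystar : Fin m → EuclideanSpace ℝ (Fin n₂),
      (∃ ζ : Fin m → EuclideanSpace ℝ (Fin n₂),
        (∀ i, ∀ z, h (ystar i) + ⟪ζ i, z - ystar i⟫ ≤ h z) ∧
        (∀ i, (1 / (m : ℝ)) • (Gy i (x' i) (ystar i) - ζ i)
            = (L / (2 * Real.sqrt (m : ℝ))) •
                ∑ j, (w j i - if i = j then 1 else 0) • lam' j)) ∧
      ∑ i, ‖y' i - ystar i‖ ^ 2 ≤ (m : ℝ) * δ' ^ 2 / μ ^ 2) :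
    ∑ i, ‖v' i - (1 / (m : ℝ)) • ∑ k, v' k‖ ^ 2
      ≤ ρ * ∑ i, ‖v i - (1 / (m : ℝ)) • ∑ k, v k‖ ^ 2
        + (L ^ 2 / (1 - ρ)) *
            ((1 + 6 * (L / μ) ^ 2) * ∑ i, ‖x' i - x i‖ ^ 2
              + 6 * (m : ℝ) * (L / μ) ^ 2 * ∑ i, ‖lam' i - lam i‖ ^ 2
              + 3 * (m : ℝ) * δ' ^ 2 / μ ^ 2 + 3 * (m : ℝ) * δ ^ 2 / μ ^ 2) := by

  obtain ⟨ys, ⟨ζ, hζ, hstat⟩, hclose⟩ := hY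
  obtain ⟨ys', ⟨ζ', hζ', hstat'⟩, hclose'⟩ := hY'
  have hm0 : (0:ℝ) < m := by exact_mod_cast hm
  have hm' : (m:ℝ) ≠ 0 := ne_of_gt hm0
  have hL : 0 < L := lt_of_lt_of_le hμ hLμ
  have hρ1' : (0:ℝ) < 1 - ρ := by linarith
  set d : Fin m → EuclideanSpace ℝ (Fin n₁) :=
    fun i => Gx i (x' i) (y' i) - Gx i (x i) (y i) with hd
  set Δ : Fin m → EuclideanSpace ℝ (Fin n₂) := fun i => ys' i - ys i with hΔ
  set U : Fin m → EuclideanSpace ℝ (Fin n₂) :=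
    fun i => ∑ j, (w j i - if i = j then 1 else 0) • (lam' j - lam j) with hU
  set S := ∑ i, ‖Δ i‖^2 with hS
  set X := ∑ i, ‖x' i - x i‖^2 with hX
  set Λd := ∑ i, ‖lam' i - lam i‖^2 with hΛd
  have hS0 : 0 ≤ S := Finset.sum_nonneg fun i _ => sq_nonneg _
  have hX0 : 0 ≤ X := Finset.sum_nonneg fun i _ => sq_nonneg _
  have hΛ0 : 0 ≤ Λd := Finset.sum_nonneg fun i _ => sq_nonneg _
  -- bound on the transported dual difference
  have hUbound : ∑ i, ‖U i‖^2 ≤ 4 * Λd := by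
    simpa [hU, hΛd] using
      block_op_bound (fun i j => w j i - if i = j then 1 else 0) 4 hWIt
        (fun j => lam' j - lam j)
  -- per-agent strong monotonicity inequality
  have key : ∀ i, μ * ‖Δ i‖^2
      ≤ L * (‖Δ i‖ * ‖x' i - x i‖) - (m:ℝ) * (L / (2*Real.sqrt (m:ℝ))) * ⟪Δ i, U i⟫ := by
    intro i
    have e1 := hstat i
    have e2 := hstat' i
    have hTU : ((∑ j, (w j i - if i = j then 1 else 0) • lam' j)
        - ∑ j, (w j i - if i = j then 1 else 0) • lam j) = U i := by
      rw [← Finset.sum_sub_distrib]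
      simp [hU, smul_sub]
    have ediff : (1/(m:ℝ)) • ((Gy i (x' i) (ys' i) - ζ' i) - (Gy i (x i) (ys i) - ζ i))
        = (L / (2*Real.sqrt (m:ℝ))) • U i := by
      rw [smul_sub, e1, e2, ← smul_sub, hTU]
    have einner : (1/(m:ℝ)) * (⟪Δ i, Gy i (x' i) (ys' i) - Gy i (x i) (ys i)⟫
          - ⟪Δ i, ζ' i - ζ i⟫)
        = (L / (2*Real.sqrt (m:ℝ))) * ⟪Δ i, U i⟫ := by
      have h3 := congrArg (fun z => ⟪Δ i, z⟫) ediff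
      simp only [real_inner_smul_right, inner_sub_right] at h3 ⊢
      linarith
    have hmono : 0 ≤ ⟪Δ i, ζ' i - ζ i⟫ := by
      have h1 := hζ i (ys' i)
      have h2 := hζ' i (ys i)
      have e4 : ys i - ys' i = -(Δ i) := by simp [hΔ]
      rw [e4, inner_neg_right] at h2
      have e5 : ⟪ζ i, ys' i - ys i⟫ = ⟪Δ i, ζ i⟫ := by rw [hΔ]; exact real_inner_comm _ _
      rw [e5] at h1
      have e6 : ⟪ζ' i, Δ i⟫ = ⟪Δ i, ζ' i⟫ := real_inner_comm _ _
      rw [e6] at h2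
      rw [inner_sub_right]
      linarith
    have hc1 : ⟪Δ i, Gy i (x' i) (ys' i) - Gy i (x' i) (ys i)⟫ ≤ -μ * ‖Δ i‖^2 :=
      hconc i (x' i) (ys' i) (ys i)
    have hc2 : ‖Gy i (x' i) (ys i) - Gy i (x i) (ys i)‖ ≤ L * ‖x' i - x i‖ := by
      have hl := hLip i (x' i) (ys i) (x i) (ys i)
      have h0 : ‖Gy i (x' i) (ys i) - Gy i (x i) (ys i)‖^2 ≤ (L * ‖x' i - x i‖)^2 := by
        have hg0 := sq_nonneg ‖Gx i (x' i) (ys i) - Gx i (x i) (ys i)‖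
        simp only [sub_self, norm_zero] at hl
        nlinarith
      have h4 := Real.sqrt_le_sqrt h0
      rwa [Real.sqrt_sq (norm_nonneg _), Real.sqrt_sq (by positivity)] at h4
    have hsplit : ⟪Δ i, Gy i (x' i) (ys' i) - Gy i (x i) (ys i)⟫
        ≤ -μ * ‖Δ i‖^2 + ‖Δ i‖ * (L * ‖x' i - x i‖) := by
      have expand : ⟪Δ i, Gy i (x' i) (ys' i) - Gy i (x i) (ys i)⟫
          = ⟪Δ i, Gy i (x' i) (ys' i) - Gy i (x' i) (ys i)⟫
            + ⟪Δ i, Gy i (x' i) (ys i) - Gy i (x i) (ys i)⟫ := by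
        rw [← inner_add_right]; congr 1; abel
      have hb := real_inner_le_norm (Δ i) (Gy i (x' i) (ys i) - Gy i (x i) (ys i))
      have hb2 : ‖Δ i‖ * ‖Gy i (x' i) (ys i) - Gy i (x i) (ys i)‖
          ≤ ‖Δ i‖ * (L * ‖x' i - x i‖) := by
        exact mul_le_mul_of_nonneg_left hc2 (norm_nonneg _)
      rw [expand]; linarith
    have h7 : ⟪Δ i, Gy i (x' i) (ys' i) - Gy i (x i) (ys i)⟫ - ⟪Δ i, ζ' i - ζ i⟫
        = (m:ℝ) * ((L / (2*Real.sqrt (m:ℝ))) * ⟪Δ i, U i⟫) := by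
      rw [← einner]; field_simp
    have : (m:ℝ) * (L / (2*Real.sqrt (m:ℝ))) * ⟪Δ i, U i⟫
        = ⟪Δ i, Gy i (x' i) (ys' i) - Gy i (x i) (ys i)⟫ - ⟪Δ i, ζ' i - ζ i⟫ := by
      rw [h7]; ring
    linarith
  -- sum the per-agent inequalities and apply Cauchy–Schwarz
  have hsum : μ * S ≤ L * (Real.sqrt S * Real.sqrt X)
      + L * Real.sqrt (m:ℝ) * (Real.sqrt S * Real.sqrt Λd) := by
    have h1 : μ * S ≤ L * (∑ i, ‖Δ i‖ * ‖x' i - x i‖)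
        - (m:ℝ) * (L / (2*Real.sqrt (m:ℝ))) * (∑ i, ⟪Δ i, U i⟫) := by
      rw [hS, Finset.mul_sum, Finset.mul_sum, Finset.mul_sum, ← Finset.sum_sub_distrib]
      exact Finset.sum_le_sum fun i _ => key i
    have hcs1 : ∑ i, ‖Δ i‖ * ‖x' i - x i‖ ≤ Real.sqrt S * Real.sqrt X := by
      simpa [hS, hX] using
        Real.sum_mul_le_sqrt_mul_sqrt Finset.univ (fun i => ‖Δ i‖) (fun i => ‖x' i - x i‖)
    have hcs2 : -(∑ i, ⟪Δ i, U i⟫) ≤ Real.sqrt S * (2 * Real.sqrt Λd) := by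
      have h2 : -(∑ i, ⟪Δ i, U i⟫) ≤ ∑ i, ‖Δ i‖ * ‖U i‖ := by
        rw [← Finset.sum_neg_distrib]
        refine Finset.sum_le_sum fun i _ => ?_
        have := abs_real_inner_le_norm (Δ i) (U i)
        have h5 := neg_abs_le ⟪Δ i, U i⟫
        linarith [abs_nonneg ⟪Δ i, U i⟫, neg_le_abs ⟪Δ i, U i⟫]
      have h3 : ∑ i, ‖Δ i‖ * ‖U i‖ ≤ Real.sqrt S * Real.sqrt (∑ i, ‖U i‖^2) := by
        simpa [hS] using
          Real.sum_mul_le_sqrt_mul_sqrt Finset.univ (fun i => ‖Δ i‖) (fun i => ‖U i‖)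
      have h4 : Real.sqrt (∑ i, ‖U i‖^2) ≤ 2 * Real.sqrt Λd := by
        have := Real.sqrt_le_sqrt hUbound
        rwa [show (4:ℝ)*Λd = 2^2*Λd by norm_num, Real.sqrt_mul (by norm_num) Λd,
          Real.sqrt_sq (by norm_num)] at this
      calc -(∑ i, ⟪Δ i, U i⟫) ≤ ∑ i, ‖Δ i‖ * ‖U i‖ := h2
        _ ≤ Real.sqrt S * Real.sqrt (∑ i, ‖U i‖^2) := h3
        _ ≤ Real.sqrt S * (2 * Real.sqrt Λd) :=
            mul_le_mul_of_nonneg_left h4 (Real.sqrt_nonneg S)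
    have hms : (m:ℝ) * (L / (2*Real.sqrt (m:ℝ))) * 2 = L * Real.sqrt (m:ℝ) := by
      have hsm : Real.sqrt (m:ℝ) * Real.sqrt (m:ℝ) = (m:ℝ) := Real.mul_self_sqrt hm0.le
      have hs0 : (0:ℝ) < Real.sqrt (m:ℝ) := Real.sqrt_pos.mpr hm0
      field_simp
      nlinarith [hsm]
    have hmc0 : 0 ≤ (m:ℝ) * (L / (2*Real.sqrt (m:ℝ))) := by positivity
    have h6 : -((m:ℝ) * (L / (2*Real.sqrt (m:ℝ))) * (∑ i, ⟪Δ i, U i⟫))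
        ≤ L * Real.sqrt (m:ℝ) * (Real.sqrt S * Real.sqrt Λd) := by
      have := mul_le_mul_of_nonneg_left hcs2 hmc0
      calc -((m:ℝ) * (L / (2*Real.sqrt (m:ℝ))) * (∑ i, ⟪Δ i, U i⟫))
          = (m:ℝ) * (L / (2*Real.sqrt (m:ℝ))) * (-(∑ i, ⟪Δ i, U i⟫)) := by ring
        _ ≤ (m:ℝ) * (L / (2*Real.sqrt (m:ℝ))) * (Real.sqrt S * (2 * Real.sqrt Λd)) := this
        _ = ((m:ℝ) * (L / (2*Real.sqrt (m:ℝ))) * 2) * (Real.sqrt S * Real.sqrt Λd) := by ring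
        _ = L * Real.sqrt (m:ℝ) * (Real.sqrt S * Real.sqrt Λd) := by rw [hms]
    have h8 : L * (∑ i, ‖Δ i‖ * ‖x' i - x i‖) ≤ L * (Real.sqrt S * Real.sqrt X) :=
      mul_le_mul_of_nonneg_left hcs1 hL.le
    linarith
  -- conclude the bound on S
  have hSb : S ≤ 2*(L/μ)^2*X + 2*(m:ℝ)*(L/μ)^2*Λd := by
    rcases eq_or_lt_of_le hS0 with hS0' | hS0'
    · rw [← hS0']; positivity
    · have hsS : 0 < Real.sqrt S := Real.sqrt_pos.mpr hS0'
      have hSS : Real.sqrt S * Real.sqrt S = S := Real.mul_self_sqrt hS0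
      have hXX : Real.sqrt X * Real.sqrt X = X := Real.mul_self_sqrt hX0
      have hΛΛ : Real.sqrt Λd * Real.sqrt Λd = Λd := Real.mul_self_sqrt hΛ0
      have hmm : Real.sqrt (m:ℝ) * Real.sqrt (m:ℝ) = (m:ℝ) := Real.mul_self_sqrt hm0.le
      have hdiv : μ * Real.sqrt S ≤ L * Real.sqrt X + L * Real.sqrt (m:ℝ) * Real.sqrt Λd := by
        have h9 : (μ * Real.sqrt S) * Real.sqrt S
            ≤ (L * Real.sqrt X + L * Real.sqrt (m:ℝ) * Real.sqrt Λd) * Real.sqrt S := by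
          calc (μ * Real.sqrt S) * Real.sqrt S = μ * S := by rw [mul_assoc, hSS]
            _ ≤ L * (Real.sqrt S * Real.sqrt X)
                + L * Real.sqrt (m:ℝ) * (Real.sqrt S * Real.sqrt Λd) := hsum
            _ = (L * Real.sqrt X + L * Real.sqrt (m:ℝ) * Real.sqrt Λd) * Real.sqrt S := by ring
        exact le_of_mul_le_mul_right h9 hsS
      have hsq := mul_self_le_mul_self (by positivity) hdiv
      have hAM : 2 * (Real.sqrt X * (Real.sqrt (m:ℝ) * Real.sqrt Λd)) ≤ X + (m:ℝ)*Λd := by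
        nlinarith [sq_nonneg (Real.sqrt X - Real.sqrt (m:ℝ) * Real.sqrt Λd)]
      have hμ2 : (0:ℝ) < μ^2 := by positivity
      have hfin : μ^2 * S ≤ 2*L^2*X + 2*L^2*((m:ℝ)*Λd) := by
        rw [← hSS, ← hXX, ← hmm, ← hΛΛ]
        nlinarith [hsq, mul_nonneg (sq_nonneg L)
          (sq_nonneg (Real.sqrt X - Real.sqrt (m:ℝ) * Real.sqrt Λd))]
      calc S = μ^2*S / μ^2 := by field_simp
        _ ≤ (2*L^2*X + 2*L^2*((m:ℝ)*Λd))/μ^2 := by gcongr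
        _ = 2*(L/μ)^2*X + 2*(m:ℝ)*(L/μ)^2*Λd := by field_simp
  -- bound the movement of y
  have hYd : ∑ i, ‖y' i - y i‖^2
      ≤ 3*((m:ℝ)*δ'^2/μ^2) + 3*S + 3*((m:ℝ)*δ^2/μ^2) := by
    have per : ∀ i, ‖y' i - y i‖^2
        ≤ 3*‖y' i - ys' i‖^2 + 3*‖Δ i‖^2 + 3*‖ys i - y i‖^2 := by
      intro i
      have hdec : y' i - y i = (y' i - ys' i) + Δ i + (ys i - y i) := by
        simp only [hΔ]; abel
      rw [hdec]; exact norm_add3_sq_le _ _ _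
    have hrev : ∑ i, ‖ys i - y i‖^2 ≤ (m:ℝ)*δ^2/μ^2 := by
      have e : ∀ i : Fin m, ‖ys i - y i‖^2 = ‖y i - ys i‖^2 := by
        intro i; rw [norm_sub_rev]
      simpa [e] using hclose
    calc ∑ i, ‖y' i - y i‖^2
        ≤ ∑ i, (3*‖y' i - ys' i‖^2 + 3*‖Δ i‖^2 + 3*‖ys i - y i‖^2) :=
          Finset.sum_le_sum fun i _ => per i
      _ = 3*(∑ i, ‖y' i - ys' i‖^2) + 3*S + 3*(∑ i, ‖ys i - y i‖^2) := by
          rw [Finset.sum_add_distrib, Finset.sum_add_distrib, ← Finset.mul_sum,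
            ← Finset.mul_sum, ← Finset.mul_sum, hS]
      _ ≤ 3*((m:ℝ)*δ'^2/μ^2) + 3*S + 3*((m:ℝ)*δ^2/μ^2) := by
          have := hclose'
          gcongr
  -- bound the gradient differences
  have hdb : ∑ i, ‖d i‖^2 ≤ L^2 * (X + ∑ i, ‖y' i - y i‖^2) := by
    calc ∑ i, ‖d i‖^2 ≤ ∑ i, L^2*(‖x' i - x i‖^2 + ‖y' i - y i‖^2) := by
          refine Finset.sum_le_sum fun i _ => ?_
          have hl := hLip i (x' i) (y' i) (x i) (y i)
          have h0 := sq_nonneg ‖Gy i (x' i) (y' i) - Gy i (x i) (y i)‖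
          simp only [hd]
          linarith
      _ = L^2 * (X + ∑ i, ‖y' i - y i‖^2) := by
        rw [← Finset.mul_sum, Finset.sum_add_distrib, hX]
  -- decomposition of the consensus error
  have hsumv' : ∑ k, v' k = (∑ k, v k) + ∑ k, d k := by
    calc ∑ k, v' k = ∑ k, ((∑ j, w k j • v j) + d k) := by
          refine Finset.sum_congr rfl fun k _ => ?_
          rw [hupd k]; simp only [hd]; abel
      _ = (∑ k, ∑ j, w k j • v j) + ∑ k, d k := Finset.sum_add_distrib
      _ = (∑ k, v k) + ∑ k, d k := by
        congr 1
        rw [Finset.sum_comm]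
        calc ∑ j, ∑ k, w k j • v j = ∑ j, (∑ k, w k j) • v j := by
              refine Finset.sum_congr rfl fun j _ => ?_
              rw [Finset.sum_smul]
          _ = ∑ j, v j := by
              refine Finset.sum_congr rfl fun j _ => ?_
              rw [hcol j, one_smul]
  have hdecomp : ∀ i, v' i - (1/(m:ℝ)) • ∑ k, v' k
      = (∑ j, (w i j - 1/(m:ℝ)) • (v j - (1/(m:ℝ)) • ∑ k, v k))
        + (d i - (1/(m:ℝ)) • ∑ k, d k) := by
    intro i
    have hzero : ∑ j, (w i j - 1/(m:ℝ)) = 0 := by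
      rw [Finset.sum_sub_distrib, hrow i]
      simp [Finset.card_univ]
      field_simp
      norm_num
    have hA : ∑ j, (w i j - 1/(m:ℝ)) • (v j - (1/(m:ℝ)) • ∑ k, v k)
        = (∑ j, w i j • v j) - (1/(m:ℝ)) • ∑ k, v k := by
      calc ∑ j, (w i j - 1/(m:ℝ)) • (v j - (1/(m:ℝ)) • ∑ k, v k)
          = ∑ j, ((w i j - 1/(m:ℝ)) • v j
              - (w i j - 1/(m:ℝ)) • ((1/(m:ℝ)) • ∑ k, v k)) := by
            refine Finset.sum_congr rfl fun j _ => ?_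
            rw [smul_sub]
        _ = (∑ j, (w i j - 1/(m:ℝ)) • v j)
            - (∑ j, (w i j - 1/(m:ℝ))) • ((1/(m:ℝ)) • ∑ k, v k) := by
            rw [Finset.sum_sub_distrib, Finset.sum_smul]
        _ = ∑ j, (w i j - 1/(m:ℝ)) • v j := by rw [hzero, zero_smul, sub_zero]
        _ = (∑ j, w i j • v j) - ∑ j, (1/(m:ℝ)) • v j := by
            rw [← Finset.sum_sub_distrib]
            refine Finset.sum_congr rfl fun j _ => ?_
            rw [sub_smul]
        _ = (∑ j, w i j • v j) - (1/(m:ℝ)) • ∑ k, v k := by rw [← Finset.smul_sum]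
    rw [hupd i, hsumv', hA, smul_add]
    simp only [hd]
    abel
  -- final assembly
  have hAbound : ∑ i, ‖∑ j, (w i j - 1/(m:ℝ)) • (v j - (1/(m:ℝ)) • ∑ k, v k)‖^2
      ≤ ρ^2 * ∑ i, ‖v i - (1/(m:ℝ)) • ∑ k, v k‖^2 :=
    block_op_bound (fun i j => w i j - 1/(m:ℝ)) (ρ^2) hcontr
      (fun j => v j - (1/(m:ℝ)) • ∑ k, v k)
  have hBbound : ∑ i, ‖d i - (1/(m:ℝ)) • ∑ k, d k‖^2 ≤ ∑ i, ‖d i‖^2 := variance_le hm d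
  have hR : ∑ i, ‖d i‖^2
      ≤ L^2 * ((1 + 6*(L/μ)^2) * X + 6*(m:ℝ)*(L/μ)^2 * Λd
          + 3*(m:ℝ)*δ'^2/μ^2 + 3*(m:ℝ)*δ^2/μ^2) := by
    have h1 : X + ∑ i, ‖y' i - y i‖^2
        ≤ (1 + 6*(L/μ)^2) * X + 6*(m:ℝ)*(L/μ)^2 * Λd
          + 3*(m:ℝ)*δ'^2/μ^2 + 3*(m:ℝ)*δ^2/μ^2 := by
      have h2 : 3*((m:ℝ)*δ'^2/μ^2) = 3*(m:ℝ)*δ'^2/μ^2 := by ring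
      have h3 : 3*((m:ℝ)*δ^2/μ^2) = 3*(m:ℝ)*δ^2/μ^2 := by ring
      nlinarith [hYd, hSb]
    calc ∑ i, ‖d i‖^2 ≤ L^2 * (X + ∑ i, ‖y' i - y i‖^2) := hdb
      _ ≤ _ := mul_le_mul_of_nonneg_left h1 (sq_nonneg L)
  calc ∑ i, ‖v' i - (1/(m:ℝ)) • ∑ k, v' k‖^2
      = ∑ i, ‖(∑ j, (w i j - 1/(m:ℝ)) • (v j - (1/(m:ℝ)) • ∑ k, v k))
          + (d i - (1/(m:ℝ)) • ∑ k, d k)‖^2 := by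
        refine Finset.sum_congr rfl fun i _ => ?_
        rw [hdecomp i]
    _ ≤ ∑ i, ((1/ρ) * ‖∑ j, (w i j - 1/(m:ℝ)) • (v j - (1/(m:ℝ)) • ∑ k, v k)‖^2
          + (1/(1-ρ)) * ‖d i - (1/(m:ℝ)) • ∑ k, d k‖^2) :=
        Finset.sum_le_sum fun i _ => young_ineq hρ0 hρ1 _ _
    _ = (1/ρ) * (∑ i, ‖∑ j, (w i j - 1/(m:ℝ)) • (v j - (1/(m:ℝ)) • ∑ k, v k)‖^2)
          + (1/(1-ρ)) * (∑ i, ‖d i - (1/(m:ℝ)) • ∑ k, d k‖^2) := by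
        rw [Finset.sum_add_distrib, ← Finset.mul_sum, ← Finset.mul_sum]
    _ ≤ (1/ρ) * (ρ^2 * ∑ i, ‖v i - (1/(m:ℝ)) • ∑ k, v k‖^2)
          + (1/(1-ρ)) * (L^2 * ((1 + 6*(L/μ)^2) * X + 6*(m:ℝ)*(L/μ)^2 * Λd
              + 3*(m:ℝ)*δ'^2/μ^2 + 3*(m:ℝ)*δ^2/μ^2)) := by
        refine add_le_add (mul_le_mul_of_nonneg_left hAbound (by positivity)) ?_
        exact mul_le_mul_of_nonneg_left (le_trans hBbound hR) (by positivity)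
    _ = ρ * ∑ i, ‖v i - (1/(m:ℝ)) • ∑ k, v k‖^2
          + (L^2/(1-ρ)) * ((1 + 6*(L/μ)^2) * X + 6*(m:ℝ)*(L/μ)^2 * Λd
              + 3*(m:ℝ)*δ'^2/μ^2 + 3*(m:ℝ)*δ^2/μ^2) := by
        rw [show (1/ρ) * (ρ^2 * ∑ i, ‖v i - (1/(m:ℝ)) • ∑ k, v k‖^2)
            = ρ * ∑ i, ‖v i - (1/(m:ℝ)) • ∑ k, v k‖^2 by
          field_simp]
        ring
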